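/- Let k ≥ 1 and let d_1,…,d_{k+1} ≥ 0 and c_1,…,c_k ≥ 0 be integers. Define x = [d_1+2, 2,…,2, d_2+3, 2,…,2, …, d_k+3, 2,…,2, d_{k+1}+2], where for each 1 ≤ i ≤ k there are exactly c_i entries equal to 2 in the i-th block of 2's, and define y = [2,…,2, c_1+3, 2,…,2, c_2+3, …, 2,…,2, c_k+3, 2,…,2], where for each 1 ≤ i ≤ k+1 the i-th block of 2's consists of exactly d_i entries. Then 1/x + 1/y = 1. (Equivalently, if x = p/q in lowest terms then y = p/(p−q); this is the explicit form of Riemenschneider point-diagram duality between the continued fraction expansions of p/q and p/(p−q).) -/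

import Mathlib

def hjCF : List ℤ → ℚ
  | [] => 0
  | a :: l => (a : ℚ) - 1 / hjCF l

def Good (L M : List ℤ) : Prop :=
  1 < hjCF L ∧ 1 < hjCF M ∧ 1 / hjCF L + 1 / hjCF M = 1

lemma Good.symm {L M : List ℤ} (h : Good L M) : Good M L :=
  ⟨h.2.1, h.1, by rw [add_comm]; exact h.2.2⟩

lemma stepA {a : ℤ} {L M : List ℤ} (h : Good (a :: L) M) :
    Good ((a + 1) :: L) ((2 : ℤ) :: M) := by
  obtain ⟨hu, hv, heq⟩ := h
  have e1 : hjCF ((a + 1) :: L) = hjCF (a :: L) + 1 := by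
    simp only [hjCF]; push_cast; ring
  have e2 : hjCF ((2 : ℤ) :: M) = 2 - 1 / hjCF M := by
    simp only [hjCF]; norm_num
  set u := hjCF (a :: L)
  set v := hjCF M
  have hv1 : 1 / v < 1 := by rw [div_lt_one (by linarith)]; linarith
  have hv0 : (0:ℚ) < 1 / v := by positivity
  have hu0 : u ≠ 0 := by positivity
  have hu1 : (u + 1) ≠ 0 := by positivity
  refine ⟨by rw [e1]; linarith, by rw [e2]; linarith, ?_⟩
  rw [e1, e2]
  have key : (2 : ℚ) - 1 / v = (u + 1) / u := by
    rw [show (1:ℚ)/v = 1 - 1/u from by linarith]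
    field_simp
    ring
  rw [key, one_div_div, ← add_div, div_eq_one_iff_eq hu1]
  ring

lemma stepA_iter (n : ℕ) {a : ℤ} {L M : List ℤ} (h : Good (a :: L) M) :
    Good ((a + n) :: L) (List.replicate n 2 ++ M) := by
  induction n with
  | zero => simpa using h
  | succ n ih =>
      have e : (a + ((n + 1 : ℕ) : ℤ)) = (a + n) + 1 := by push_cast; ring
      rw [e, List.replicate_succ, List.cons_append]
      exact stepA ih

lemma stepB_iter (n : ℕ) {b : ℤ} {L M : List ℤ} (h : Good L (b :: M)) :
    Good (List.replicate n 2 ++ L) ((b + n) :: M) :=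
  (stepA_iter n h.symm).symm

lemma good_two : Good [(2:ℤ)] [(2:ℤ)] := by
  have : hjCF [(2:ℤ)] = 2 := by simp [hjCF]
  refine ⟨by rw [this]; norm_num, by rw [this]; norm_num, by rw [this]; norm_num⟩

lemma phaseLemma (d1 c1 : ℕ) {a : ℤ} {L M : List ℤ} (h : Good (a :: L) M) :
    Good (((d1 : ℤ) + 2) :: (List.replicate c1 2 ++ (a + 1) :: L))
      (List.replicate d1 2 ++ ((c1 : ℤ) + 3) :: M) := by
  have h1 := stepA h
  have h2 := stepB_iter (c1 + 1) h1
  rw [List.replicate_succ, List.cons_append] at h2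
  have h3 := stepA_iter d1 h2
  have e1 : ((2:ℤ) + d1) = (d1 : ℤ) + 2 := by ring
  have e2 : ((2:ℤ) + ((c1 + 1 : ℕ) : ℤ)) = (c1 : ℤ) + 3 := by push_cast; ring
  rw [e1, e2] at h3
  exact h3

def Xlist (k : ℕ) (d c : ℕ → ℕ) : List ℤ :=
  [(d 1 : ℤ) + 2] ++
      ((List.range (k - 1)).flatMap fun i =>
        List.replicate (c (i + 1)) (2 : ℤ) ++ [(d (i + 2) : ℤ) + 3]) ++
      List.replicate (c k) (2 : ℤ) ++ [(d (k + 1) : ℤ) + 2]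

def Ylist (k : ℕ) (d c : ℕ → ℕ) : List ℤ :=
  ((List.range k).flatMap fun i =>
        List.replicate (d (i + 1)) (2 : ℤ) ++ [(c (i + 1) : ℤ) + 3]) ++
      List.replicate (d (k + 1)) (2 : ℤ)

lemma main_aux : ∀ (m : ℕ) (d c : ℕ → ℕ), Good (Xlist (m + 1) d c) (Ylist (m + 1) d c) := by
  intro m
  induction m with
  | zero =>
      intro d c
      have h0 : Good [(2 : ℤ) + (d 2 : ℤ)] (List.replicate (d 2 + 1) 2) := by
        have := stepA_iter (d 2) good_two
        rw [show List.replicate (d 2) (2:ℤ) ++ [2] = List.replicate (d 2 + 1) 2 from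
          List.replicate_succ'.symm] at this
        simpa using this
      rw [List.replicate_succ] at h0
      have h1 := stepB_iter (c 1 + 1) h0
      rw [List.replicate_succ, List.cons_append] at h1
      have h2 := stepA_iter (d 1) h1
      have e1 : ((2:ℤ) + (d 1 : ℤ)) = (d 1 : ℤ) + 2 := by ring
      have e2 : ((2:ℤ) + ((c 1 + 1 : ℕ) : ℤ)) = (c 1 : ℤ) + 3 := by push_cast; ring
      have e3 : ((2:ℤ) + (d 2 : ℤ)) = (d 2 : ℤ) + 2 := by ring
      rw [e1, e2, e3] at h2
      have hX : Xlist 1 d c = ((d 1 : ℤ) + 2) :: (List.replicate (c 1) 2 ++ [(d 2 : ℤ) + 2]) := by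
        simp [Xlist]
      have hY : Ylist 1 d c =
          List.replicate (d 1) 2 ++ ((c 1 : ℤ) + 3) :: List.replicate (d 2) 2 := by
        simp [Ylist, List.range_succ]
      rw [hX, hY]
      exact h2
  | succ m ih =>
      intro d c
      have IH := ih (fun i => d (i + 1)) (fun i => c (i + 1))
      have hX' : Xlist (m + 1) (fun i => d (i + 1)) (fun i => c (i + 1)) =
          ((d 2 : ℤ) + 2) :: (((List.range m).flatMap fun i =>
            List.replicate (c (i + 2)) (2 : ℤ) ++ [(d (i + 3) : ℤ) + 3]) ++
            List.replicate (c (m + 2)) (2 : ℤ) ++ [(d (m + 3) : ℤ) + 2]) := by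
        simp [Xlist]
      rw [hX'] at IH
      have h := phaseLemma (d 1) (c 1) IH
      have hX2 : Xlist (m + 2) d c = ((d 1 : ℤ) + 2) :: (List.replicate (c 1) 2 ++
          (((d 2 : ℤ) + 2) + 1) :: (((List.range m).flatMap fun i =>
            List.replicate (c (i + 2)) (2 : ℤ) ++ [(d (i + 3) : ℤ) + 3]) ++
            List.replicate (c (m + 2)) (2 : ℤ) ++ [(d (m + 3) : ℤ) + 2])) := by
        simp [Xlist, List.range_succ_eq_map, List.flatMap_map, Function.comp]
        ring_nf
      have hY2 : Ylist (m + 2) d c = List.replicate (d 1) 2 ++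
          ((c 1 : ℤ) + 3) :: Ylist (m + 1) (fun i => d (i + 1)) (fun i => c (i + 1)) := by
        simp [Ylist, List.range_succ_eq_map, List.flatMap_map, Function.comp]
      rw [hX2, hY2]
      exact h

theorem stmt10 (k : ℕ) (hk : 1 ≤ k) (d c : ℕ → ℕ) (x y : ℚ)
    (hx : x = hjCF ([(d 1 : ℤ) + 2] ++
      ((List.range (k - 1)).flatMap fun i =>
        List.replicate (c (i + 1)) (2 : ℤ) ++ [(d (i + 2) : ℤ) + 3]) ++
      List.replicate (c k) (2 : ℤ) ++ [(d (k + 1) : ℤ) + 2]))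
    (hy : y = hjCF (((List.range k).flatMap fun i =>
        List.replicate (d (i + 1)) (2 : ℤ) ++ [(c (i + 1) : ℤ) + 3]) ++
      List.replicate (d (k + 1)) (2 : ℤ))) :
    1 / x + 1 / y = 1 := by
  obtain ⟨m, rfl⟩ : ∃ m, k = m + 1 := ⟨k - 1, by omega⟩
  have h := main_aux m d c
  rw [hx, hy]
  exact h.2.2
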